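/- Let p > 1 be a real number, let z ∈ {−L⁻¹, L⁻¹}, and let a : L⁻¹ℤ → [0,∞]. Then, with all sums taken in [0,∞], ∑_{x∈L⁻¹ℤ} a(x)·a(x+z)^{p−1}/(1+|x+z|)^{2p} ≤ (sup_{y∈L⁻¹ℤ} ((1+|y|)/(1+|y+z|))²) · ∑_{x∈L⁻¹ℤ} a(x)^p/(1+|x|)^{2p}. -/

import Mathlib

open scoped ENNReal

open MeasureTheory

namespace HolderDemeBound

/-- The real position `n / L` of the deme indexed by `n : ℤ`. -/
noncomputable def pos (L : ℝ) (n : ℤ) : ℝ := (n : ℝ) / L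

/-- For `p > 1`, `z ∈ {−L⁻¹, L⁻¹}` (encoded as a shift by `±1` of the
integer index) and `a : L⁻¹ℤ → [0,∞]`, with all sums taken in `[0,∞]`:
`∑_x a(x) a(x+z)^{p−1}/(1+|x+z|)^{2p}
  ≤ (sup_y ((1+|y|)/(1+|y+z|))²) ∑_x a(x)^p/(1+|x|)^{2p}`. -/
theorem statement17 (L : ℝ) (hL : 0 < L) (p : ℝ) (hp : 1 < p) (z : ℤ)
    (hz : z = 1 ∨ z = -1) (a : ℤ → ℝ≥0∞) :
    (∑' x : ℤ, a x * a (x + z) ^ (p - 1) / ENNReal.ofReal ((1 + |pos L (x + z)|) ^ (2 * p))) ≤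
      (⨆ y : ℤ, (ENNReal.ofReal ((1 + |pos L y|) / (1 + |pos L (y + z)|))) ^ 2) *
        ∑' x : ℤ, a x ^ p / ENNReal.ofReal ((1 + |pos L x|) ^ (2 * p)) := by
  clear hz hL
  have hppos : (0:ℝ) < p := lt_trans one_pos hp
  have hp1 : (0:ℝ) ≤ p - 1 := by linarith
  have h2p : (0:ℝ) ≤ 2 * p := by linarith
  -- weights
  set W : ℤ → ℝ≥0∞ := fun n => ENNReal.ofReal (1 + |pos L n|) with hWdef
  have hWR : ∀ n : ℤ, (0:ℝ) < 1 + |pos L n| := fun n => by positivity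
  have hW1 : ∀ n : ℤ, (1:ℝ≥0∞) ≤ W n := fun n => by
    rw [hWdef, show (1:ℝ≥0∞) = ENNReal.ofReal 1 by simp]
    exact ENNReal.ofReal_le_ofReal (by simp [abs_nonneg])
  have hWne0 : ∀ n : ℤ, W n ≠ 0 := fun n => by
    exact fun h => by simpa [h] using hW1 n
  have hWnetop : ∀ n : ℤ, W n ≠ ∞ := fun n => ENNReal.ofReal_ne_top
  have hWpow : ∀ n : ℤ, ENNReal.ofReal ((1 + |pos L n|) ^ (2 * p)) = W n ^ (2 * p) := fun n =>
    (ENNReal.ofReal_rpow_of_pos (hWR n)).symm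
  have hWpne0 : ∀ n : ℤ, W n ^ (2 * p) ≠ 0 := fun n =>
    (ENNReal.rpow_pos (lt_of_lt_of_le one_pos (hW1 n)) (hWnetop n)).ne'
  have hWpnetop : ∀ n : ℤ, W n ^ (2 * p) ≠ ∞ :=
    fun n => ENNReal.rpow_ne_top_of_nonneg h2p (hWnetop n)
  have hWdiv : ∀ y : ℤ, ENNReal.ofReal ((1 + |pos L y|) / (1 + |pos L (y + z)|))
      = W y / W (y + z) := fun y => ENNReal.ofReal_div_of_pos (hWR (y + z))
  -- the constant and the sum
  set C : ℝ≥0∞ := ⨆ y : ℤ, (W y / W (y + z)) ^ 2 with hCdef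
  set S : ℝ≥0∞ := ∑' x : ℤ, a x ^ p / W x ^ (2 * p) with hSdef
  have hq : Real.HolderConjugate p (Real.conjExponent p) := Real.HolderConjugate.conjExponent hp
  set q : ℝ := Real.conjExponent p with hqdef
  -- Hölder factors
  set f : ℤ → ℝ≥0∞ := fun x => a x / W (x + z) ^ (2:ℝ) with hfdef
  set g : ℤ → ℝ≥0∞ := fun x => (a (x + z) / W (x + z) ^ (2:ℝ)) ^ (p - 1) with hgdef
  have hsplit : ∀ n : ℤ, W n ^ (2 * p) = W n ^ (2:ℝ) * W n ^ (2 * (p - 1)) := fun n => by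
    rw [← ENNReal.rpow_add_of_nonneg _ _ (by norm_num) (by linarith)]
    ring_nf
  have hfg : ∀ x : ℤ, a x * a (x + z) ^ (p - 1) / W (x + z) ^ (2 * p) = f x * g x := by
    intro x
    rw [hfdef, hgdef]
    simp only
    rw [ENNReal.div_rpow_of_nonneg _ _ hp1, ← ENNReal.rpow_mul, hsplit (x + z)]
    rw [div_eq_mul_inv, div_eq_mul_inv, div_eq_mul_inv,
      ENNReal.mul_inv (Or.inr (ENNReal.rpow_ne_top_of_nonneg (by linarith) (hWnetop _)))
        (Or.inl (ENNReal.rpow_ne_top_of_nonneg (by norm_num) (hWnetop _)))]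
    ring
  -- measurability (discrete space)
  have hf : Measurable f := measurable_of_countable f
  have hg : Measurable g := measurable_of_countable g
  -- Hölder
  have holder := ENNReal.lintegral_mul_le_Lp_mul_Lq (Measure.count : Measure ℤ) hq
    hf.aemeasurable hg.aemeasurable
  rw [lintegral_count, lintegral_count, lintegral_count] at holder
  -- bound on ∑ f^p
  have hCpowle : ∀ x : ℤ, (W x / W (x + z)) ^ (2 * p) ≤ C ^ p := by
    intro x
    have h1 : (W x / W (x + z)) ^ (2 * p) = ((W x / W (x + z)) ^ (2:ℕ)) ^ p := by
      rw [← ENNReal.rpow_natCast _ 2, ← ENNReal.rpow_mul]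
      norm_num
    rw [h1]
    exact ENNReal.rpow_le_rpow (le_iSup (fun y => (W y / W (y + z)) ^ 2) x) (le_of_lt hppos)
  have hfp : ∀ x : ℤ, f x ^ p = a x ^ p / W (x + z) ^ (2 * p) := by
    intro x
    rw [hfdef]
    simp only
    rw [ENNReal.div_rpow_of_nonneg _ _ (le_of_lt hppos), ← ENNReal.rpow_mul]
  have hfple : ∀ x : ℤ, f x ^ p ≤ C ^ p * (a x ^ p / W x ^ (2 * p)) := by
    intro x
    rw [hfp x]
    have key : a x ^ p / W (x + z) ^ (2 * p)
        = (W x / W (x + z)) ^ (2 * p) * (a x ^ p / W x ^ (2 * p)) := by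
      rw [ENNReal.div_rpow_of_nonneg _ _ h2p, div_eq_mul_inv, div_eq_mul_inv, div_eq_mul_inv,
        show W x ^ (2*p) * (W (x+z) ^ (2*p))⁻¹ * (a x ^ p * (W x ^ (2*p))⁻¹)
          = (W x ^ (2*p) * (W x ^ (2*p))⁻¹) * (a x ^ p * (W (x+z) ^ (2*p))⁻¹) by ring,
        ENNReal.mul_inv_cancel (hWpne0 x) (hWpnetop x), one_mul]
    rw [key]
    exact mul_le_mul_left (hCpowle x) _
  have hsumf : (∑' x : ℤ, f x ^ p) ≤ C ^ p * S := by
    calc (∑' x : ℤ, f x ^ p) ≤ ∑' x : ℤ, C ^ p * (a x ^ p / W x ^ (2 * p)) :=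
          ENNReal.tsum_le_tsum hfple
      _ = C ^ p * S := by rw [hSdef, ENNReal.tsum_mul_left]
  -- the sum of g^q equals S by reindexing
  have hgq : ∀ x : ℤ, g x ^ q = a (x + z) ^ p / W (x + z) ^ (2 * p) := by
    intro x
    rw [hgdef]
    simp only
    rw [← ENNReal.rpow_mul]
    have hpq1 : (p - 1) * q = p := by
      have hne : p - 1 ≠ 0 := by linarith
      rw [hqdef, Real.conjExponent, mul_comm, div_mul_cancel₀ _ hne]
    rw [hpq1, ENNReal.div_rpow_of_nonneg _ _ (le_of_lt hppos), ← ENNReal.rpow_mul]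
  have hsumg : (∑' x : ℤ, g x ^ q) = S := by
    calc (∑' x : ℤ, g x ^ q) = ∑' x : ℤ, a (x + z) ^ p / W (x + z) ^ (2 * p) :=
          tsum_congr hgq
      _ = S := by
          rw [hSdef]
          exact (Equiv.addRight z).tsum_eq (fun y => a y ^ p / W y ^ (2 * p))
  -- put everything together
  have main : (∑' x : ℤ, f x * g x) ≤ C * S := by
    calc (∑' x : ℤ, f x * g x)
        ≤ (∑' x : ℤ, f x ^ p) ^ (1 / p) * (∑' x : ℤ, g x ^ q) ^ (1 / q) := by
          simpa using holder
      _ ≤ (C ^ p * S) ^ (1 / p) * S ^ (1 / q) := by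
          rw [hsumg]
          exact mul_le_mul_left (ENNReal.rpow_le_rpow hsumf (by positivity)) _
      _ = C * (S ^ (1 / p) * S ^ (1 / q)) := by
          rw [ENNReal.mul_rpow_of_nonneg _ _ (by positivity), ← ENNReal.rpow_mul,
            mul_one_div_cancel (ne_of_gt hppos), ENNReal.rpow_one, mul_assoc]
      _ = C * S := by
          have hq0 : (0:ℝ) < q := hq.symm.pos
          rw [← ENNReal.rpow_add_of_nonneg (1/p) (1/q) (by positivity)
              (one_div_nonneg.mpr hq0.le)]
          rw [one_div, one_div, hq.inv_add_inv_eq_one, ENNReal.rpow_one]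
  calc (∑' x : ℤ, a x * a (x + z) ^ (p - 1) / ENNReal.ofReal ((1 + |pos L (x + z)|) ^ (2 * p)))
      = ∑' x : ℤ, f x * g x := by
        refine tsum_congr fun x => ?_
        rw [hWpow (x + z), hfg x]
    _ ≤ C * S := main
    _ = (⨆ y : ℤ, (ENNReal.ofReal ((1 + |pos L y|) / (1 + |pos L (y + z)|))) ^ 2) *
        ∑' x : ℤ, a x ^ p / ENNReal.ofReal ((1 + |pos L x|) ^ (2 * p)) := by
        rw [hCdef, hSdef]
        congr 1
        · exact iSup_congr fun y => by rw [hWdiv y]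
        · exact tsum_congr fun x => by rw [hWpow x]

end HolderDemeBound
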